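/- Let p be an odd prime and let f : (ZMod p)^n → ℂ be a non-constant Boolean function (f(x) ∈ {−1,1} for all x). Suppose |f̂(0)| is maximal over all Fourier coefficients in absolute value, and let β ≠ 0 be such that |f̂(β)| is maximal over all γ ≠ 0. Then 2·|f̂(0)| ≤ ∑_{γ ∈ (ZMod p)^n, γ ≠ 0, γ ≠ β} min(|f̂(γ)|, |f̂(γ−β)|). -/

import Mathlib

/-- `ω = exp(2πi/p)`, a primitive `p`-th root of unity. -/
noncomputable def pomega (p : ℕ) : ℂ :=
  Complex.exp (2 * Real.pi * Complex.I / p)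

/-- The character `χ_α(x) = ω^{⟨α,x⟩}` on `(ZMod p)^n` (well-defined via `ZMod.val`
since `ω^p = 1`). -/
noncomputable def pchi (p n : ℕ) (α x : Fin n → ZMod p) : ℂ :=
  pomega p ^ (∑ i, α i * x i : ZMod p).val

/-- The Fourier coefficient `f̂(α) = p^{-n} ∑_x f(x) conj(χ_α(x))`. -/
noncomputable def phat (p n : ℕ) [NeZero p] (f : (Fin n → ZMod p) → ℂ)
    (α : Fin n → ZMod p) : ℂ :=
  ((p : ℂ) ^ n)⁻¹ * ∑ x : Fin n → ZMod p, f x * (starRingEnd ℂ) (pchi p n α x)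

section aux

variable (p : ℕ) [Fact p.Prime]

lemma pomega_pow_p : pomega p ^ p = 1 := by
  have hp : (p : ℂ) ≠ 0 := Nat.cast_ne_zero.mpr (Fact.out (p := p.Prime)).ne_zero
  rw [pomega, ← Complex.exp_nat_mul]
  rw [show (p : ℂ) * (2 * Real.pi * Complex.I / p) = 2 * Real.pi * Complex.I by
    field_simp]
  exact Complex.exp_two_pi_mul_I

/-- `a ↦ ω^{a.val}` as an additive character of `ZMod p`. -/
noncomputable def pE : AddChar (ZMod p) ℂ where
  toFun a := pomega p ^ a.val
  map_zero_eq_one' := by simp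
  map_add_eq_mul' a b := by
    rw [ZMod.val_add, ← pow_eq_pow_mod _ (pomega_pow_p p), pow_add]

lemma pE_apply (a : ZMod p) : pE p a = pomega p ^ a.val := rfl

lemma pomega_ne_one : pomega p ≠ 1 := by
  intro h
  rw [pomega, Complex.exp_eq_one_iff] at h
  obtain ⟨k, hk⟩ := h
  have hπ : (2 * (Real.pi : ℂ) * Complex.I) ≠ 0 := by
    simp [Real.pi_ne_zero, Complex.I_ne_zero]
  have hp : (p : ℂ) ≠ 0 := Nat.cast_ne_zero.mpr (Fact.out (p := p.Prime)).ne_zero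
  have h2 : 2 * (Real.pi : ℂ) * Complex.I = (k : ℂ) * (2 * Real.pi * Complex.I) * p := by
    rw [← hk]; field_simp
  have h3 : ((k : ℂ) * p) * (2 * (Real.pi : ℂ) * Complex.I)
      = 1 * (2 * (Real.pi : ℂ) * Complex.I) := by linear_combination -h2
  have h4 : (k : ℂ) * p = 1 := mul_right_cancel₀ hπ h3
  have h5 : (k * (p : ℤ) : ℤ) = 1 := by exact_mod_cast h4
  have h6 : (p : ℤ) ∣ 1 := ⟨k, by linarith⟩
  have := Int.le_of_dvd one_pos h6
  have hp2 := (Fact.out (p := p.Prime)).two_le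
  omega

lemma pE_one_ne_one : pE p 1 ≠ 1 := by
  rw [pE_apply, ZMod.val_one_eq_one_mod]
  rw [Nat.mod_eq_of_lt (Fact.out (p := p.Prime)).one_lt, pow_one]
  exact pomega_ne_one p

lemma pE_abs (a : ZMod p) : ‖pE p a‖ = 1 := by
  rw [pE_apply, norm_pow]
  suffices h : ‖pomega p‖ = 1 by rw [h, one_pow]
  rw [pomega, show (2 * (Real.pi : ℂ) * Complex.I / (p : ℂ))
      = ((2 * Real.pi / p : ℝ) : ℂ) * Complex.I by push_cast; ring]
  exact Complex.norm_exp_ofReal_mul_I _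

lemma pE_conj (a : ZMod p) : (starRingEnd ℂ) (pE p a) = pE p (-a) := by
  have h1 : pE p a * pE p (-a) = 1 := by
    rw [← AddChar.map_add_eq_mul, add_neg_cancel, AddChar.map_zero_eq_one]
  rw [← Complex.inv_eq_conj (pE_abs p a)]
  exact inv_eq_of_mul_eq_one_right h1

variable (n : ℕ)

/-- The inner product `γ ↦ ∑ γᵢ vᵢ` as an additive hom. -/
def pip (v : Fin n → ZMod p) : (Fin n → ZMod p) →+ ZMod p where
  toFun γ := ∑ i, γ i * v i
  map_zero' := by simp
  map_add' a b := by simp [add_mul, Finset.sum_add_distrib]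

/-- The character `γ ↦ ω^{⟨γ,v⟩}` of `(ZMod p)^n`. -/
noncomputable def pPsi (v : Fin n → ZMod p) : AddChar (Fin n → ZMod p) ℂ :=
  (pE p).compAddMonoidHom (pip p n v)

lemma pPsi_apply (v γ : Fin n → ZMod p) : pPsi p n v γ = pE p (∑ i, γ i * v i) := rfl

lemma sum_pPsi (v : Fin n → ZMod p) :
    ∑ γ : Fin n → ZMod p, pPsi p n v γ = if v = 0 then (p : ℂ) ^ n else 0 := by
  split_ifs with h
  · subst h
    simp [pPsi_apply, Finset.card_univ, ZMod.card]
  · apply AddChar.sum_eq_zero_iff_ne_zero.mpr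
    intro hΨ
    obtain ⟨j, hj⟩ := Function.ne_iff.mp h
    have h1 : pPsi p n v (Pi.single j (v j)⁻¹) = 1 := by rw [hΨ]; simp
    rw [pPsi_apply] at h1
    have hsum : ∑ i, (Pi.single j (v j)⁻¹ : Fin n → ZMod p) i * v i = 1 := by
      rw [Finset.sum_eq_single j]
      · rw [Pi.single_eq_same, inv_mul_cancel₀ hj]
      · intro i _ hi
        rw [Pi.single_eq_of_ne hi, zero_mul]
      · intro hju; exact absurd (Finset.mem_univ j) hju
    rw [hsum] at h1
    exact pE_one_ne_one p h1

lemma pchi_eq (α x : Fin n → ZMod p) : pchi p n α x = pE p (∑ i, α i * x i) := rfl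

variable {n : ℕ} (f : (Fin n → ZMod p) → ℂ)

lemma pN_ne_zero : ((p : ℂ) ^ n) ≠ 0 :=
  pow_ne_zero _ (Nat.cast_ne_zero.mpr (Fact.out (p := p.Prime)).ne_zero)

/-- Fourier inversion. -/
lemma pinversion (x : Fin n → ZMod p) :
    ∑ γ : Fin n → ZMod p, phat p n f γ * pE p (∑ i, γ i * x i) = f x := by
  have key : ∀ y γ : Fin n → ZMod p,
      (starRingEnd ℂ) (pE p (∑ i, γ i * y i)) * pE p (∑ i, γ i * x i)
        = pPsi p n (x - y) γ := by
    intro y γ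
    rw [pE_conj, ← AddChar.map_add_eq_mul, pPsi_apply]
    congr 1
    simp only [Pi.sub_apply, mul_sub, Finset.sum_sub_distrib]
    ring
  calc ∑ γ : Fin n → ZMod p, phat p n f γ * pE p (∑ i, γ i * x i)
      = ((p : ℂ) ^ n)⁻¹ * ∑ γ : Fin n → ZMod p, ∑ y : Fin n → ZMod p,
          f y * pPsi p n (x - y) γ := by
        rw [Finset.mul_sum]
        refine Finset.sum_congr rfl fun γ _ => ?_
        simp only [phat, pchi_eq]
        rw [mul_assoc, Finset.sum_mul]
        congr 1
        refine Finset.sum_congr rfl fun y _ => ?_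
        rw [mul_assoc, key y γ]
    _ = ((p : ℂ) ^ n)⁻¹ * ∑ y : Fin n → ZMod p,
          f y * (if x - y = 0 then (p : ℂ) ^ n else 0) := by
        rw [Finset.sum_comm]
        congr 1
        refine Finset.sum_congr rfl fun y _ => ?_
        rw [← Finset.mul_sum, sum_pPsi]
    _ = f x := by
        simp only [sub_eq_zero, mul_ite, mul_zero]
        rw [Finset.sum_ite_eq Finset.univ x fun y => f y * (p : ℂ) ^ n]
        simp only [Finset.mem_univ, if_true]
        rw [mul_comm (f x), ← mul_assoc, inv_mul_cancel₀ (pN_ne_zero p), one_mul]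

/-- Plancherel-type identity at a nonzero frequency. -/
lemma pplancherel (hfu : ∀ x, f x * (starRingEnd ℂ) (f x) = 1)
    (β : Fin n → ZMod p) (hβ : β ≠ 0) :
    ∑ γ : Fin n → ZMod p, phat p n f γ * (starRingEnd ℂ) (phat p n f (γ - β)) = 0 := by
  have key : ∀ x y γ : Fin n → ZMod p,
      (starRingEnd ℂ) (pE p (∑ i, γ i * x i)) * pE p (∑ i, (γ - β) i * y i)
        = pPsi p n (y - x) γ * pE p (-∑ i, β i * y i) := by
    intro x y γ
    rw [pE_conj, ← AddChar.map_add_eq_mul, pPsi_apply, ← AddChar.map_add_eq_mul]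
    congr 1
    simp only [Pi.sub_apply, sub_mul, mul_sub, Finset.sum_sub_distrib]
    ring
  have step1 : ∀ γ : Fin n → ZMod p,
      phat p n f γ * (starRingEnd ℂ) (phat p n f (γ - β))
        = ((p : ℂ) ^ n)⁻¹ * ((p : ℂ) ^ n)⁻¹ *
          ∑ x : Fin n → ZMod p, ∑ y : Fin n → ZMod p,
            (f x * (starRingEnd ℂ) (f y) * pE p (-∑ i, β i * y i)) *
              pPsi p n (y - x) γ := by
    intro γ
    simp only [phat, pchi_eq]
    rw [map_mul, map_inv₀, map_pow, Complex.conj_natCast, map_sum]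
    rw [mul_mul_mul_comm, Finset.sum_mul_sum]
    refine congrArg _ (Finset.sum_congr rfl fun x _ => Finset.sum_congr rfl fun y _ => ?_)
    rw [map_mul, Complex.conj_conj]
    linear_combination (f x * (starRingEnd ℂ) (f y)) * key x y γ
  calc ∑ γ : Fin n → ZMod p, phat p n f γ * (starRingEnd ℂ) (phat p n f (γ - β))
      = ((p : ℂ) ^ n)⁻¹ * ((p : ℂ) ^ n)⁻¹ *
          ∑ x : Fin n → ZMod p, ∑ y : Fin n → ZMod p,
            (f x * (starRingEnd ℂ) (f y) * pE p (-∑ i, β i * y i)) *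
              ∑ γ : Fin n → ZMod p, pPsi p n (y - x) γ := by
        simp only [step1]
        rw [← Finset.mul_sum]
        congr 1
        rw [Finset.sum_comm]
        refine Finset.sum_congr rfl fun x _ => ?_
        rw [Finset.sum_comm]
        exact Finset.sum_congr rfl fun y _ => (Finset.mul_sum _ _ _).symm
    _ = ((p : ℂ) ^ n)⁻¹ * ((p : ℂ) ^ n)⁻¹ *
          ∑ x : Fin n → ZMod p,
            (pE p (-∑ i, β i * x i)) * (p : ℂ) ^ n := by
        congr 1
        refine Finset.sum_congr rfl fun x _ => ?_
        have : ∀ y : Fin n → ZMod p,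
            (f x * (starRingEnd ℂ) (f y) * pE p (-∑ i, β i * y i)) *
              ∑ γ : Fin n → ZMod p, pPsi p n (y - x) γ
            = (f x * (starRingEnd ℂ) (f y) * pE p (-∑ i, β i * y i)) *
              (if y - x = 0 then (p : ℂ) ^ n else 0) := by
          intro y; rw [sum_pPsi]
        simp only [this, sub_eq_zero, mul_ite, mul_zero]
        rw [Finset.sum_ite_eq' Finset.univ x]
        simp only [Finset.mem_univ, if_true]
        rw [hfu x, one_mul]
    _ = 0 := by
        have h0 : ∑ x : Fin n → ZMod p, pE p (-∑ i, β i * x i) = 0 := by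
          have heq : ∀ x : Fin n → ZMod p,
              pE p (-∑ i, β i * x i) = pPsi p n (-β) x := by
            intro x
            rw [pPsi_apply]
            congr 1
            simp [mul_comm, Finset.sum_neg_distrib]
          simp only [heq]
          rw [sum_pPsi, if_neg (neg_ne_zero.mpr hβ)]
        rw [← Finset.sum_mul, h0, zero_mul, mul_zero]

end aux

/-- **Lemma 4.4**: if `f : (ZMod p)^n → {−1,1}` is non-constant, `|f̂(0)|` is the
largest Fourier coefficient in absolute value and `|f̂(β)|` (`β ≠ 0`) the second
largest, then `2|f̂(0)| ≤ ∑_{γ ≠ 0, β} min(|f̂(γ)|, |f̂(γ−β)|)`. -/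
theorem p_largest_coeff_inequality {p n : ℕ} [Fact p.Prime] (hp2 : p ≠ 2)
    (f : (Fin n → ZMod p) → ℂ) (hf : ∀ x, f x = 1 ∨ f x = -1)
    (hnc : ∃ x y, f x ≠ f y)
    (h0 : ∀ γ, ‖phat p n f γ‖ ≤ ‖phat p n f 0‖)
    (β : Fin n → ZMod p) (hβ : β ≠ 0)
    (hβmax : ∀ γ, γ ≠ 0 → ‖phat p n f γ‖ ≤ ‖phat p n f β‖) :
    2 * ‖phat p n f 0‖ ≤
      ∑ γ ∈ Finset.univ \ {0, β},
        min (‖phat p n f γ‖) (‖phat p n f (γ - β)‖) := by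
  classical
  have hfr : ∀ x, (starRingEnd ℂ) (f x) = f x := fun x => by
    rcases hf x with h | h <;> simp [h]
  have hfu : ∀ x, f x * (starRingEnd ℂ) (f x) = 1 := fun x => by
    rcases hf x with h | h <;> simp [h]
  -- the second largest coefficient is nonzero
  have hβne : phat p n f β ≠ 0 := by
    intro h
    have hall : ∀ γ, γ ≠ 0 → phat p n f γ = 0 := by
      intro γ hγ
      have := hβmax γ hγ
      rw [h, norm_zero] at this
      exact norm_eq_zero.mp (le_antisymm this (norm_nonneg _))
    obtain ⟨x, y, hxy⟩ := hnc
    apply hxy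
    have hconst : ∀ z : Fin n → ZMod p, f z = phat p n f 0 := by
      intro z
      rw [← pinversion p f z, Finset.sum_eq_single 0]
      · simp
      · intro γ _ hγ; rw [hall γ hγ, zero_mul]
      · intro h; exact absurd (Finset.mem_univ 0) h
    rw [hconst x, hconst y]
  have hβpos : 0 < ‖phat p n f β‖ := norm_pos_iff.mpr hβne
  -- conjugation facts
  have hconj0 : (starRingEnd ℂ) (phat p n f 0) = phat p n f 0 := by
    simp only [phat, pchi_eq]
    rw [map_mul, map_inv₀, map_pow, Complex.conj_natCast, map_sum]
    congr 1
    refine Finset.sum_congr rfl fun x _ => ?_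
    rw [map_mul, Complex.conj_conj, hfr]
    simp
  have hconjβ : (starRingEnd ℂ) (phat p n f (-β)) = phat p n f β := by
    simp only [phat, pchi_eq]
    rw [map_mul, map_inv₀, map_pow, Complex.conj_natCast, map_sum]
    congr 1
    refine Finset.sum_congr rfl fun x _ => ?_
    rw [map_mul, Complex.conj_conj, hfr, pE_conj]
    congr 2
    simp [Finset.sum_neg_distrib]
  -- split the Plancherel identity
  have hS := pplancherel p f hfu β hβ
  have hsub : ({0, β} : Finset (Fin n → ZMod p)) ⊆ Finset.univ := Finset.subset_univ _
  rw [← Finset.sum_sdiff hsub] at hS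
  have hpair : ∑ γ ∈ ({0, β} : Finset (Fin n → ZMod p)),
      phat p n f γ * (starRingEnd ℂ) (phat p n f (γ - β))
      = 2 * phat p n f 0 * phat p n f β := by
    rw [Finset.sum_pair hβ.symm]
    rw [zero_sub, hconjβ, sub_self, hconj0]
    ring
  rw [hpair] at hS
  have hsplit : ∑ γ ∈ Finset.univ \ ({0, β} : Finset (Fin n → ZMod p)),
      phat p n f γ * (starRingEnd ℂ) (phat p n f (γ - β))
      = -(2 * phat p n f 0 * phat p n f β) := by
    linear_combination hS
  -- absolute value estimates
  have habs : 2 * ‖phat p n f 0‖ * ‖phat p n f β‖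
      ≤ ‖phat p n f β‖ *
        ∑ γ ∈ Finset.univ \ ({0, β} : Finset (Fin n → ZMod p)),
          min (‖phat p n f γ‖) (‖phat p n f (γ - β)‖) := by
    calc 2 * ‖phat p n f 0‖ * ‖phat p n f β‖
        = ‖∑ γ ∈ Finset.univ \ ({0, β} : Finset (Fin n → ZMod p)),
            phat p n f γ * (starRingEnd ℂ) (phat p n f (γ - β))‖ := by
          rw [hsplit, norm_neg, norm_mul, norm_mul, Complex.norm_two]
      _ ≤ ∑ γ ∈ Finset.univ \ ({0, β} : Finset (Fin n → ZMod p)),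
            ‖phat p n f γ * (starRingEnd ℂ) (phat p n f (γ - β))‖ :=
          norm_sum_le _ _
      _ ≤ ∑ γ ∈ Finset.univ \ ({0, β} : Finset (Fin n → ZMod p)),
            ‖phat p n f β‖ *
              min (‖phat p n f γ‖) (‖phat p n f (γ - β)‖) := by
          refine Finset.sum_le_sum fun γ hγ => ?_
          rw [Finset.mem_sdiff, Finset.mem_insert, Finset.mem_singleton] at hγ
          push_neg at hγ
          obtain ⟨-, hγ0, hγβ⟩ := hγ
          have ha := hβmax γ hγ0
          have hb := hβmax (γ - β) (sub_ne_zero.mpr hγβ)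
          have hna := norm_nonneg (phat p n f γ)
          have hnb := norm_nonneg (phat p n f (γ - β))
          rw [norm_mul, Complex.norm_conj]
          rcases le_total (‖phat p n f γ‖) (‖phat p n f (γ - β)‖)
            with h | h
          · rw [min_eq_left h]; nlinarith
          · rw [min_eq_right h]; nlinarith
      _ = ‖phat p n f β‖ *
            ∑ γ ∈ Finset.univ \ ({0, β} : Finset (Fin n → ZMod p)),
              min (‖phat p n f γ‖) (‖phat p n f (γ - β)‖) :=
          (Finset.mul_sum _ _ _).symm
  have := le_of_mul_le_mul_right (by linarith [habs] :
      2 * ‖phat p n f 0‖ * ‖phat p n f β‖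
        ≤ (∑ γ ∈ Finset.univ \ ({0, β} : Finset (Fin n → ZMod p)),
            min (‖phat p n f γ‖) (‖phat p n f (γ - β)‖)) *
          ‖phat p n f β‖) hβpos
  exact this
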